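/- arXiv:2211.08603 — 3 statements merged into one kernel-verified Lean document; each statement's English description precedes it below -/
import Mathlib

section
/- Let σ ∈ (0,1), δ ∈ (0,1), μ_ξ > 0 and c > 0, and let (y_k)_{k∈ℕ} be a nonnegative real sequence satisfying y_{k+1} ≤ σ·y_k + μ_ξ/(k+1)^δ + c for all k ∈ ℕ. Let t̄ ∈ ℕ be any integer with |ln σ| − δ/(t̄+1) > 0 (e.g. t̄ = max{0, ⌈δ/|ln σ| − 1⌉·2} works). Then for all k ∈ ℕ, y_{k+1} ≤ W₁·σ^{k+1} + W₂/(k+1)^δ + W₃, where W₁ = y₀ + μ_ξ·Σ_{t=0}^{t̄−1} σ^{−(t+1)}/(t+1)^δ, W₂ = σ^{−1}·μ_ξ·(|ln σ| − δ/(t̄+1))^{−1}, and W₃ = c/(1−σ). -/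
open Finset Real

/-- Lemma 1 of the paper: decay estimate for a nonnegative sequence driven by a linear
contraction, a polynomially decaying forcing term and a constant forcing term. -/
theorem stmt_0
    (σ δ μξ c : ℝ) (hσ : σ ∈ Set.Ioo (0:ℝ) 1) (hδ : δ ∈ Set.Ioo (0:ℝ) 1)
    (hμ : 0 < μξ) (hc : 0 < c)
    (y : ℕ → ℝ) (hy : ∀ k, 0 ≤ y k)
    (hrec : ∀ k : ℕ, y (k + 1) ≤ σ * y k + μξ / ((k : ℝ) + 1) ^ δ + c)
    (tbar : ℕ) (htbar : 0 < |Real.log σ| - δ / ((tbar : ℝ) + 1)) :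
    ∀ k : ℕ,
      y (k + 1) ≤
        (y 0 + μξ * ∑ t ∈ Finset.range tbar, σ ^ (-((t : ℝ) + 1)) / ((t : ℝ) + 1) ^ δ)
            * σ ^ (k + 1)
          + (σ⁻¹ * μξ * (|Real.log σ| - δ / ((tbar : ℝ) + 1))⁻¹) / ((k : ℝ) + 1) ^ δ
          + c / (1 - σ) := by
  obtain ⟨hσ0, hσ1⟩ := hσ
  obtain ⟨hδ0, hδ1⟩ := hδ
  set A : ℝ := |Real.log σ| - δ / ((tbar : ℝ) + 1) with hAdef
  set F : ℕ → ℝ := fun t => σ ^ (-((t : ℝ) + 1)) / ((t : ℝ) + 1) ^ δ with hFdef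
  have hFpos : ∀ t : ℕ, 0 < F t := by
    intro t
    have h1 : (0:ℝ) < (t:ℝ) + 1 := by positivity
    exact div_pos (Real.rpow_pos_of_pos hσ0 _) (Real.rpow_pos_of_pos h1 _)
  -- step inequality
  have hstep : ∀ t : ℕ, tbar ≤ t → F t ≤ A⁻¹ * (F (t + 1) - F t) := by
    intro t ht
    have hu : (0:ℝ) < (t:ℝ) + 1 := by positivity
    have hu2 : (0:ℝ) < (t:ℝ) + 2 := by positivity
    have hratio : F (t + 1) = (σ⁻¹ * (((t:ℝ)+1)/((t:ℝ)+2)) ^ δ) * F t := by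
      simp only [hFdef]
      push_cast
      rw [Real.div_rpow hu.le hu2.le,
        show -((t:ℝ) + 1 + 1) = (-1) + (-((t:ℝ)+1)) by ring,
        Real.rpow_add hσ0, Real.rpow_neg_one]
      have h1 : (((t:ℝ)+1) ^ δ) ≠ 0 := ne_of_gt (Real.rpow_pos_of_pos hu _)
      have h2 : (((t:ℝ)+2) ^ δ) ≠ 0 := ne_of_gt (Real.rpow_pos_of_pos hu2 _)
      field_simp
      ring
    have hkey : 1 + A ≤ σ⁻¹ * (((t:ℝ)+1)/((t:ℝ)+2)) ^ δ := by
      have hlt : Real.log σ < 0 := Real.log_neg hσ0 hσ1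
      have habs : |Real.log σ| = -Real.log σ := abs_of_neg hlt
      have hlog1 : Real.log (((t:ℝ)+2)/((t:ℝ)+1)) ≤ 1 / ((t:ℝ)+1) := by
        have h := Real.log_le_sub_one_of_pos (show (0:ℝ) < ((t:ℝ)+2)/((t:ℝ)+1) by positivity)
        have heq : ((t:ℝ)+2)/((t:ℝ)+1) - 1 = 1/((t:ℝ)+1) := by
          rw [div_sub_one (ne_of_gt hu)]
          congr 1
          ring
        linarith [heq ▸ h]
      have htb : 1 / ((t:ℝ)+1) ≤ 1 / ((tbar:ℝ)+1) := by
        apply one_div_le_one_div_of_le (by positivity)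
        have : (tbar:ℝ) ≤ (t:ℝ) := by exact_mod_cast ht
        linarith
      have hAle : A ≤ -Real.log σ + δ * Real.log (((t:ℝ)+1)/((t:ℝ)+2)) := by
        rw [hAdef, habs]
        have hlogneg : Real.log (((t:ℝ)+1)/((t:ℝ)+2)) = - Real.log (((t:ℝ)+2)/((t:ℝ)+1)) := by
          rw [← Real.log_inv]
          congr 1
          rw [inv_div]
        rw [hlogneg]
        have h1 : δ * Real.log (((t:ℝ)+2)/((t:ℝ)+1)) ≤ δ * (1/((tbar:ℝ)+1)) := by
          apply mul_le_mul_of_nonneg_left _ hδ0.le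
          linarith
        have h2 : δ / ((tbar:ℝ)+1) = δ * (1/((tbar:ℝ)+1)) := by ring
        linarith
      have hrhs : σ⁻¹ * (((t:ℝ)+1)/((t:ℝ)+2)) ^ δ
          = Real.exp (-Real.log σ + δ * Real.log (((t:ℝ)+1)/((t:ℝ)+2))) := by
        rw [Real.exp_add,
          Real.rpow_def_of_pos (show (0:ℝ) < ((t:ℝ)+1)/((t:ℝ)+2) by positivity),
          mul_comm (Real.log (((t:ℝ)+1)/((t:ℝ)+2))) δ, ← Real.log_inv,
          Real.exp_log (inv_pos.mpr hσ0)]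
      calc 1 + A ≤ Real.exp A := by linarith [Real.add_one_le_exp A]
        _ ≤ Real.exp (-Real.log σ + δ * Real.log (((t:ℝ)+1)/((t:ℝ)+2))) :=
            Real.exp_le_exp.mpr hAle
        _ = σ⁻¹ * (((t:ℝ)+1)/((t:ℝ)+2)) ^ δ := hrhs.symm
    have hFd : A * F t ≤ F (t + 1) - F t := by
      rw [hratio]
      nlinarith [hFpos t, hkey]
    have h := mul_le_mul_of_nonneg_left hFd (inv_nonneg.mpr htbar.le)
    rwa [← mul_assoc, inv_mul_cancel₀ (ne_of_gt htbar), one_mul] at h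
  -- telescoping tail bound
  have htail : ∀ n : ℕ, tbar ≤ n → ∑ t ∈ Finset.Ico tbar n, F t ≤ A⁻¹ * F n := by
    intro n hn
    calc ∑ t ∈ Finset.Ico tbar n, F t
        ≤ ∑ t ∈ Finset.Ico tbar n, A⁻¹ * (F (t+1) - F t) :=
          Finset.sum_le_sum fun t htm => hstep t (Finset.mem_Ico.mp htm).1
      _ = A⁻¹ * ∑ t ∈ Finset.Ico tbar n, (F (t+1) - F t) := by rw [Finset.mul_sum]
      _ = A⁻¹ * (F n - F tbar) := by
          congr 1
          rw [Finset.sum_Ico_eq_sub _ hn, Finset.sum_range_sub, Finset.sum_range_sub]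
          ring
      _ ≤ A⁻¹ * F n := by
          apply mul_le_mul_of_nonneg_left _ (inv_nonneg.mpr htbar.le)
          linarith [hFpos tbar]
  -- unrolling
  have hunroll : ∀ k : ℕ, y (k + 1) ≤ σ ^ (k+1) * y 0
      + ∑ t ∈ Finset.range (k+1), σ ^ (k - t) * (μξ / ((t:ℝ)+1) ^ δ + c) := by
    intro k
    induction k with
    | zero => simpa [add_assoc] using hrec 0
    | succ k ih =>
      have h1 := hrec (k+1)
      have h2 : σ * y (k+1) ≤ σ * (σ ^ (k+1) * y 0
          + ∑ t ∈ Finset.range (k+1), σ ^ (k - t) * (μξ / ((t:ℝ)+1) ^ δ + c)) :=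
        mul_le_mul_of_nonneg_left ih hσ0.le
      have h3 : σ * ∑ t ∈ Finset.range (k+1), σ ^ (k - t) * (μξ / ((t:ℝ)+1) ^ δ + c)
          = ∑ t ∈ Finset.range (k+1), σ ^ (k + 1 - t) * (μξ / ((t:ℝ)+1) ^ δ + c) := by
        rw [Finset.mul_sum]
        apply Finset.sum_congr rfl
        intro t htm
        have htk : t ≤ k := Nat.lt_succ_iff.mp (Finset.mem_range.mp htm)
        rw [show k + 1 - t = (k - t) + 1 by omega, pow_succ]
        ring
      have h4 : ∑ t ∈ Finset.range (k+2), σ ^ (k + 1 - t) * (μξ / ((t:ℝ)+1) ^ δ + c)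
          = ∑ t ∈ Finset.range (k+1), σ ^ (k + 1 - t) * (μξ / ((t:ℝ)+1) ^ δ + c)
            + (μξ / (((k+1:ℕ):ℝ)+1) ^ δ + c) := by
        rw [Finset.sum_range_succ]
        simp
      push_cast at h1 h4 ⊢
      rw [h4]
      rw [mul_add, h3] at h2
      have h5 : σ * (σ ^ (k+1) * y 0) = σ ^ (k+1+1) * y 0 := by ring
      calc y (k + 1 + 1) ≤ σ * y (k+1) + μξ / ((k:ℝ)+1+1) ^ δ + c := h1
        _ ≤ σ ^ (k+1+1) * y 0
            + (∑ t ∈ Finset.range (k+1), σ ^ (k + 1 - t) * (μξ / ((t:ℝ)+1) ^ δ + c)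
              + (μξ / ((k:ℝ)+1+1) ^ δ + c)) := by linarith [h5 ▸ h2]
  intro k
  -- geometric sum bound
  have hgeom : ∑ t ∈ Finset.range (k+1), σ ^ (k - t) ≤ 1 / (1 - σ) := by
    have hrefl : ∑ t ∈ Finset.range (k+1), σ ^ (k - t)
        = ∑ t ∈ Finset.range (k+1), σ ^ t := by
      have h := Finset.sum_range_reflect (fun j => σ ^ j) (k+1)
      simp only [Nat.add_sub_cancel] at h
      exact h
    have h1 : (0:ℝ) < 1 - σ := by linarith
    have hm := geom_sum_mul σ (k+1)
    have hkey : (∑ t ∈ Finset.range (k+1), σ ^ t) * (1 - σ) = 1 - σ ^ (k+1) := by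
      linear_combination -hm
    rw [hrefl, le_div_iff₀ h1, hkey]
    linarith [pow_nonneg hσ0.le (k+1)]
  -- relate σ^(k-t)/(t+1)^δ to σ^(k+1) * F t
  have hFrel : ∀ t : ℕ, t ≤ k → σ ^ (k - t) / ((t:ℝ)+1) ^ δ = σ ^ (k+1) * F t := by
    intro t ht
    simp only [hFdef]
    rw [← mul_div_assoc]
    congr 1
    rw [← Real.rpow_natCast σ (k - t), ← Real.rpow_natCast σ (k + 1), ← Real.rpow_add hσ0]
    congr 1
    rw [Nat.cast_sub ht]
    push_cast
    ring
  have hbsplit : ∑ t ∈ Finset.range (k+1), σ ^ (k - t) * (μξ / ((t:ℝ)+1) ^ δ + c)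
      = μξ * (σ ^ (k+1) * ∑ t ∈ Finset.range (k+1), F t)
        + c * ∑ t ∈ Finset.range (k+1), σ ^ (k - t) := by
    rw [Finset.mul_sum, Finset.mul_sum, Finset.mul_sum, ← Finset.sum_add_distrib]
    refine Finset.sum_congr rfl fun t htm => ?_
    have ht : t ≤ k := Nat.lt_succ_iff.mp (Finset.mem_range.mp htm)
    have h := hFrel t ht
    calc σ ^ (k - t) * (μξ / ((t:ℝ)+1) ^ δ + c)
        = μξ * (σ ^ (k - t) / ((t:ℝ)+1) ^ δ) + c * σ ^ (k - t) := by ring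
      _ = μξ * (σ ^ (k+1) * F t) + c * σ ^ (k - t) := by rw [h]
  have hu := hunroll k
  rw [hbsplit] at hu
  have hcG : c * ∑ t ∈ Finset.range (k+1), σ ^ (k - t) ≤ c / (1 - σ) := by
    calc c * ∑ t ∈ Finset.range (k+1), σ ^ (k - t) ≤ c * (1 / (1 - σ)) :=
          mul_le_mul_of_nonneg_left hgeom hc.le
      _ = c / (1 - σ) := by ring
  have hmu : μξ * (σ ^ (k+1) * ∑ t ∈ Finset.range (k+1), F t)
      ≤ μξ * (∑ t ∈ Finset.range tbar, F t) * σ ^ (k+1)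
        + (σ⁻¹ * μξ * A⁻¹) / ((k:ℝ)+1) ^ δ := by
    rcases le_or_gt (k+1) tbar with hcase | hcase
    · have hsub : ∑ t ∈ Finset.range (k+1), F t ≤ ∑ t ∈ Finset.range tbar, F t :=
        Finset.sum_le_sum_of_subset_of_nonneg (Finset.range_subset_range.mpr hcase)
          (fun t _ _ => (hFpos t).le)
      have h1 : μξ * (σ ^ (k+1) * ∑ t ∈ Finset.range (k+1), F t)
          ≤ μξ * (∑ t ∈ Finset.range tbar, F t) * σ ^ (k+1) := by
        calc μξ * (σ ^ (k+1) * ∑ t ∈ Finset.range (k+1), F t)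
            = (μξ * σ ^ (k+1)) * ∑ t ∈ Finset.range (k+1), F t := by ring
          _ ≤ (μξ * σ ^ (k+1)) * ∑ t ∈ Finset.range tbar, F t :=
              mul_le_mul_of_nonneg_left hsub (by positivity)
          _ = μξ * (∑ t ∈ Finset.range tbar, F t) * σ ^ (k+1) := by ring
      have h2 : 0 ≤ (σ⁻¹ * μξ * A⁻¹) / ((k:ℝ)+1) ^ δ := by positivity
      linarith
    · have hsplit : ∑ t ∈ Finset.range (k+1), F t
          = ∑ t ∈ Finset.range tbar, F t + ∑ t ∈ Finset.Ico tbar (k+1), F t := by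
        rw [Finset.range_eq_Ico, Finset.range_eq_Ico]
        exact (Finset.sum_Ico_consecutive F (Nat.zero_le tbar) (show tbar ≤ k+1 by omega)).symm
      have hlast : σ ^ (k+1) * F (k+1) = σ⁻¹ / (((k:ℝ)+2) ^ δ) := by
        simp only [hFdef]
        push_cast
        rw [← mul_div_assoc]
        have hden : ((k:ℝ) + 1 + 1) = ((k:ℝ) + 2) := by ring
        rw [hden]
        congr 1
        rw [← Real.rpow_natCast σ (k+1), ← Real.rpow_add hσ0, ← Real.rpow_neg_one σ]
        congr 1
        push_cast
        ring
      have hmono : σ⁻¹ / (((k:ℝ)+2) ^ δ) ≤ σ⁻¹ / (((k:ℝ)+1) ^ δ) := by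
        apply div_le_div_of_nonneg_left (inv_pos.mpr hσ0).le
          (Real.rpow_pos_of_pos (by positivity) δ)
          (Real.rpow_le_rpow (by positivity) (by linarith) hδ0.le)
      have t1 : ∑ t ∈ Finset.Ico tbar (k+1), F t ≤ A⁻¹ * F (k+1) :=
        htail (k+1) (by omega)
      have t2 : σ ^ (k+1) * ∑ t ∈ Finset.Ico tbar (k+1), F t
          ≤ A⁻¹ * (σ⁻¹ / (((k:ℝ)+2) ^ δ)) := by
        calc σ ^ (k+1) * ∑ t ∈ Finset.Ico tbar (k+1), F t
            ≤ σ ^ (k+1) * (A⁻¹ * F (k+1)) :=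
              mul_le_mul_of_nonneg_left t1 (pow_nonneg hσ0.le _)
          _ = A⁻¹ * (σ ^ (k+1) * F (k+1)) := by ring
          _ = A⁻¹ * (σ⁻¹ / (((k:ℝ)+2) ^ δ)) := by rw [hlast]
      have t3 : σ ^ (k+1) * ∑ t ∈ Finset.Ico tbar (k+1), F t
          ≤ A⁻¹ * (σ⁻¹ / (((k:ℝ)+1) ^ δ)) :=
        t2.trans (mul_le_mul_of_nonneg_left hmono (inv_nonneg.mpr htbar.le))
      have t4 := mul_le_mul_of_nonneg_left t3 hμ.le
      calc μξ * (σ ^ (k+1) * ∑ t ∈ Finset.range (k+1), F t)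
          = μξ * (∑ t ∈ Finset.range tbar, F t) * σ ^ (k+1)
            + μξ * (σ ^ (k+1) * ∑ t ∈ Finset.Ico tbar (k+1), F t) := by
            rw [hsplit]; ring
        _ ≤ μξ * (∑ t ∈ Finset.range tbar, F t) * σ ^ (k+1)
            + μξ * (A⁻¹ * (σ⁻¹ / (((k:ℝ)+1) ^ δ))) := by linarith
        _ = μξ * (∑ t ∈ Finset.range tbar, F t) * σ ^ (k+1)
            + (σ⁻¹ * μξ * A⁻¹) / ((k:ℝ)+1) ^ δ := by ring
  calc y (k+1) ≤ σ ^ (k+1) * y 0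
        + (μξ * (σ ^ (k+1) * ∑ t ∈ Finset.range (k+1), F t)
          + c * ∑ t ∈ Finset.range (k+1), σ ^ (k - t)) := hu
    _ ≤ σ ^ (k+1) * y 0
        + (μξ * (∑ t ∈ Finset.range tbar, F t) * σ ^ (k+1)
          + (σ⁻¹ * μξ * A⁻¹) / ((k:ℝ)+1) ^ δ) + c / (1 - σ) := by linarith
    _ = (y 0 + μξ * ∑ t ∈ Finset.range tbar, F t) * σ ^ (k+1)
        + (σ⁻¹ * μξ * A⁻¹) / ((k:ℝ)+1) ^ δ + c / (1 - σ) := by ring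
end

section
/- Let λ ∈ (0,1), δ_e ∈ (0,1), and A, c > 0, and let (m_k)_{k∈ℕ} be a nonnegative real sequence satisfying m_{k+1} ≤ √λ·m_k + A/(k+1)^{δ_e} + c for all k ∈ ℕ. Let t̄ ∈ ℕ be any integer with |ln √λ| − δ_e/(t̄+1) > 0. Then for all k ∈ ℕ, m_{k+1} ≤ Y₁·(√λ)^{k+1} + Y₂/(k+1)^{δ_e} + Y₃, where Y₁ = m₀ + A·Σ_{t=0}^{t̄−1} (√λ)^{−(t+1)}/(t+1)^{δ_e}, Y₂ = A·(√λ)^{−1}·(|ln √λ| − δ_e/(t̄+1))^{−1}, and Y₃ = c/(1−√λ). -/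
private lemma geom_bound (r : ℝ) (h0 : 0 ≤ r) (h1 : r < 1) (n : ℕ) :
    ∑ i ∈ Finset.range n, r ^ i ≤ 1 / (1 - r) := by
  rw [geom_sum_eq h1.ne n]
  have h2 : (0:ℝ) < 1 - r := by linarith
  have h3 : (r ^ n - 1) / (r - 1) = (1 - r ^ n) / (1 - r) := by
    rw [← neg_div_neg_eq]; ring_nf
  rw [h3, div_le_div_iff₀ h2 h2]
  nlinarith [pow_nonneg h0 n]

/-- Deterministic core of Theorem 1 (consensus) of the paper: the expected squared
consensus error `m k` contracts with factor `√λ`, driven by the event-triggering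
threshold term `A/(k+1)^δₑ` and a constant term `c`, yielding the consensus bound
`m (k+1) ≤ Y₁ (√λ)^(k+1) + Y₂/(k+1)^δₑ + Y₃`. -/
theorem stmt_1
    (lam δe A c : ℝ) (hlam : lam ∈ Set.Ioo (0:ℝ) 1) (hδe : δe ∈ Set.Ioo (0:ℝ) 1)
    (hA : 0 < A) (hc : 0 < c)
    (m : ℕ → ℝ) (hm : ∀ k, 0 ≤ m k)
    (hrec : ∀ k : ℕ, m (k + 1) ≤ Real.sqrt lam * m k + A / ((k : ℝ) + 1) ^ δe + c)
    (tbar : ℕ) (htbar : 0 < |Real.log (Real.sqrt lam)| - δe / ((tbar : ℝ) + 1)) :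
    ∀ k : ℕ,
      m (k + 1) ≤
        (m 0 + A * ∑ t ∈ Finset.range tbar,
              (Real.sqrt lam) ^ (-((t : ℝ) + 1)) / ((t : ℝ) + 1) ^ δe)
            * (Real.sqrt lam) ^ (k + 1)
          + (A * (Real.sqrt lam)⁻¹
              * (|Real.log (Real.sqrt lam)| - δe / ((tbar : ℝ) + 1))⁻¹) / ((k : ℝ) + 1) ^ δe
          + c / (1 - Real.sqrt lam) := by
  obtain ⟨hlam0, hlam1⟩ := hlam
  obtain ⟨hδ0, hδ1⟩ := hδe
  set s := Real.sqrt lam with hsdef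
  have hs0 : 0 < s := Real.sqrt_pos.mpr hlam0
  have hs1 : s < 1 := by
    rw [hsdef, Real.sqrt_lt' one_pos]; nlinarith
  have hlogneg : Real.log s < 0 := Real.log_neg hs0 hs1
  have habs : |Real.log s| = -Real.log s := abs_of_neg hlogneg
  set ρ := |Real.log s| - δe / ((tbar : ℝ) + 1) with hρdef
  have hρ : 0 < ρ := htbar
  set r := Real.exp (-ρ) with hrdef
  have hr0 : 0 < r := Real.exp_pos _
  have hr1 : r < 1 := Real.exp_lt_one_iff.mpr (by linarith)
  have htb1 : (0:ℝ) < (tbar : ℝ) + 1 := by positivity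
  have hsr : s ≤ r := by
    have hh : -ρ = Real.log s + δe / ((tbar : ℝ) + 1) := by rw [hρdef, habs]; ring
    rw [hrdef, hh]
    calc s = Real.exp (Real.log s) := (Real.exp_log hs0).symm
    _ ≤ _ := Real.exp_le_exp.mpr (by
        have : 0 ≤ δe / ((tbar : ℝ) + 1) := by positivity
        linarith)
  have hsρr : s * ρ ≤ 1 - r := by
    have h1 := Real.add_one_le_exp ρ
    have h2 : r * Real.exp ρ = 1 := by rw [hrdef, ← Real.exp_add]; simp
    nlinarith
  have hden : ∀ t : ℕ, (0:ℝ) < ((t : ℝ) + 1) ^ δe := fun t =>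
    Real.rpow_pos_of_pos (by positivity) _
  -- Step 1: unroll the recursion
  have unroll : ∀ k : ℕ, m (k + 1) ≤
      m 0 * s ^ (k + 1)
        + A * ∑ t ∈ Finset.range (k + 1), s ^ (k - t) / ((t : ℝ) + 1) ^ δe
        + c / (1 - s) := by
    intro k
    induction k with
    | zero =>
      have h := hrec 0
      have hc' : c ≤ c / (1 - s) := by
        rw [le_div_iff₀ (by linarith)]; nlinarith
      norm_num [Real.one_rpow] at h ⊢
      linarith
    | succ n ih =>
      have h := hrec (n + 1)
      push_cast at h
      have hsum : ∑ t ∈ Finset.range (n + 2), s ^ (n + 1 - t) / ((t : ℝ) + 1) ^ δe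
          = s * ∑ t ∈ Finset.range (n + 1), s ^ (n - t) / ((t : ℝ) + 1) ^ δe
            + 1 / ((n : ℝ) + 1 + 1) ^ δe := by
        rw [Finset.sum_range_succ, Finset.mul_sum]
        congr 1
        · apply Finset.sum_congr rfl
          intro t ht
          have ht' : t ≤ n := Nat.lt_succ_iff.mp (Finset.mem_range.mp ht)
          have hnt : n + 1 - t = (n - t) + 1 := by omega
          rw [hnt, pow_succ]
          ring
        · push_cast
          simp
      have hcc : s * (c / (1 - s)) + c = c / (1 - s) := by
        have h1s : (1:ℝ) - s ≠ 0 := by linarith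
        field_simp
        ring
      calc m (n + 1 + 1) ≤ s * m (n + 1) + A / ((n : ℝ) + 1 + 1) ^ δe + c := h
      _ ≤ s * (m 0 * s ^ (n + 1)
            + A * ∑ t ∈ Finset.range (n + 1), s ^ (n - t) / ((t : ℝ) + 1) ^ δe
            + c / (1 - s)) + A / ((n : ℝ) + 1 + 1) ^ δe + c := by
          have := mul_le_mul_of_nonneg_left ih hs0.le
          linarith
      _ = m 0 * s ^ (n + 1 + 1)
            + A * (s * ∑ t ∈ Finset.range (n + 1), s ^ (n - t) / ((t : ℝ) + 1) ^ δe
              + 1 / ((n : ℝ) + 1 + 1) ^ δe)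
            + (s * (c / (1 - s)) + c) := by ring
      _ = _ := by rw [hcc, hsum]
  -- head per-term identity
  have hterm : ∀ k t : ℕ, t ≤ k →
      s ^ (k - t) / ((t : ℝ) + 1) ^ δe
        = s ^ (-((t : ℝ) + 1)) / ((t : ℝ) + 1) ^ δe * s ^ (k + 1) := by
    intro k t ht
    have h1 : s ^ (-((t : ℝ) + 1)) = (s ^ (t + 1))⁻¹ := by
      rw [Real.rpow_neg hs0.le]
      congr 1
      rw [show ((t : ℝ) + 1) = ((t + 1 : ℕ) : ℝ) by push_cast; ring, Real.rpow_natCast]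
    have h2 : s ^ (k - t) * s ^ (t + 1) = s ^ (k + 1) := by
      rw [← pow_add]; congr 1; omega
    rw [h1, ← h2]
    have := pow_ne_zero (t + 1) hs0.ne'
    field_simp
    try ring
  -- tail per-term bound
  have htail : ∀ k t : ℕ, tbar ≤ t → t ≤ k →
      s ^ (k - t) / ((t : ℝ) + 1) ^ δe ≤ r ^ (k - t) / ((k : ℝ) + 1) ^ δe := by
    intro k t htb htk
    rw [div_le_div_iff₀ (hden t) (hden k)]
    have hkt : ((k - t : ℕ) : ℝ) = (k : ℝ) - t := by
      push_cast [Nat.cast_sub htk]; ring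
    have e1 : s ^ (k - t) = Real.exp (((k - t : ℕ) : ℝ) * Real.log s) := by
      rw [Real.exp_nat_mul, Real.exp_log hs0]
    have e2 : r ^ (k - t) = Real.exp (((k - t : ℕ) : ℝ) * (-ρ)) := by
      rw [hrdef, Real.exp_nat_mul]
    have e3 : ((k : ℝ) + 1) ^ δe = Real.exp (Real.log ((k:ℝ)+1) * δe) :=
      Real.rpow_def_of_pos (by positivity) _
    have e4 : ((t : ℝ) + 1) ^ δe = Real.exp (Real.log ((t:ℝ)+1) * δe) :=
      Real.rpow_def_of_pos (by positivity) _
    rw [e1, e2, e3, e4, ← Real.exp_add, ← Real.exp_add, Real.exp_le_exp]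
    have hlog2 : Real.log ((k:ℝ)+1) - Real.log ((t:ℝ)+1) ≤ ((k:ℝ) - t) / ((t:ℝ) + 1) := by
      rw [← Real.log_div (by positivity) (by positivity)]
      have h := Real.log_le_sub_one_of_pos (show (0:ℝ) < ((k:ℝ)+1)/((t:ℝ)+1) by positivity)
      calc Real.log (((k:ℝ)+1)/((t:ℝ)+1)) ≤ ((k:ℝ)+1)/((t:ℝ)+1) - 1 := h
      _ = ((k:ℝ) - t) / ((t:ℝ) + 1) := by
          rw [div_sub' (by positivity : ((t:ℝ)+1) ≠ 0)]
          ring_nf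
    have hlog3 : ((k:ℝ) - t) / ((t:ℝ) + 1) ≤ ((k:ℝ) - t) / ((tbar:ℝ) + 1) := by
      have hkt' : (0:ℝ) ≤ (k:ℝ) - t := by
        have := (Nat.cast_le (α := ℝ)).mpr htk; linarith
      gcongr
      all_goals exact_mod_cast htb
    have hδmul : δe * (Real.log ((k:ℝ)+1) - Real.log ((t:ℝ)+1))
        ≤ δe * (((k:ℝ) - t) / ((tbar:ℝ) + 1)) :=
      mul_le_mul_of_nonneg_left (le_trans hlog2 hlog3) hδ0.le
    have hρeq : -ρ = Real.log s + δe / ((tbar:ℝ)+1) := by rw [hρdef, habs]; ring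
    rw [hρeq, hkt]
    have expand : ((k:ℝ) - t) * (Real.log s + δe / ((tbar:ℝ)+1)) + Real.log ((t:ℝ)+1) * δe
        - (((k:ℝ) - t) * Real.log s + Real.log ((k:ℝ)+1) * δe)
        = δe * (((k:ℝ) - t) / ((tbar:ℝ)+1))
          - δe * (Real.log ((k:ℝ)+1) - Real.log ((t:ℝ)+1)) := by
      ring
    nlinarith [hδmul]
  have htailub : 1 / (1 - r) ≤ s⁻¹ * ρ⁻¹ := by
    have h := one_div_le_one_div_of_le (mul_pos hs0 hρ) hsρr
    rwa [one_div (s * ρ), mul_inv] at h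
  -- Step 2: bound the unrolled sum
  have sumbound : ∀ k : ℕ,
      ∑ t ∈ Finset.range (k + 1), s ^ (k - t) / ((t : ℝ) + 1) ^ δe
        ≤ (∑ t ∈ Finset.range tbar, s ^ (-((t : ℝ) + 1)) / ((t : ℝ) + 1) ^ δe) * s ^ (k + 1)
          + (s⁻¹ * ρ⁻¹) / ((k : ℝ) + 1) ^ δe := by
    intro k
    have hheadnn : ∀ t : ℕ,
        (0:ℝ) ≤ s ^ (-((t : ℝ) + 1)) / ((t : ℝ) + 1) ^ δe * s ^ (k + 1) := by
      intro t
      have h1 := Real.rpow_pos_of_pos hs0 (-((t : ℝ) + 1))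
      have h2 := hden t
      positivity
    have hlast : (0:ℝ) ≤ (s⁻¹ * ρ⁻¹) / ((k : ℝ) + 1) ^ δe := by
      have := hden k; positivity
    by_cases hcase : k + 1 ≤ tbar
    · have heq : ∑ t ∈ Finset.range (k + 1), s ^ (k - t) / ((t : ℝ) + 1) ^ δe
          = ∑ t ∈ Finset.range (k + 1),
              s ^ (-((t : ℝ) + 1)) / ((t : ℝ) + 1) ^ δe * s ^ (k + 1) :=
        Finset.sum_congr rfl fun t ht =>
          hterm k t (Nat.lt_succ_iff.mp (Finset.mem_range.mp ht))
      rw [heq]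
      have hsub : Finset.range (k + 1) ⊆ Finset.range tbar := Finset.range_subset_range.mpr hcase
      calc ∑ t ∈ Finset.range (k + 1), s ^ (-((t : ℝ) + 1)) / ((t : ℝ) + 1) ^ δe * s ^ (k + 1)
          ≤ ∑ t ∈ Finset.range tbar, s ^ (-((t : ℝ) + 1)) / ((t : ℝ) + 1) ^ δe * s ^ (k + 1) :=
            Finset.sum_le_sum_of_subset_of_nonneg hsub fun t _ _ => hheadnn t
      _ = (∑ t ∈ Finset.range tbar, s ^ (-((t : ℝ) + 1)) / ((t : ℝ) + 1) ^ δe) * s ^ (k + 1) :=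
            (Finset.sum_mul _ _ _).symm
      _ ≤ _ := le_add_of_nonneg_right hlast
    · push_neg at hcase
      have htbk : tbar ≤ k := Nat.lt_succ_iff.mp hcase
      have hsplit : ∑ t ∈ Finset.range (k + 1), s ^ (k - t) / ((t : ℝ) + 1) ^ δe
          = ∑ t ∈ Finset.range tbar, s ^ (k - t) / ((t : ℝ) + 1) ^ δe
            + ∑ t ∈ Finset.Ico tbar (k + 1), s ^ (k - t) / ((t : ℝ) + 1) ^ δe := by
        exact (Finset.sum_range_add_sum_Ico _ (by omega : tbar ≤ k + 1)).symm
      rw [hsplit]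
      have hhead : ∑ t ∈ Finset.range tbar, s ^ (k - t) / ((t : ℝ) + 1) ^ δe
          = (∑ t ∈ Finset.range tbar, s ^ (-((t : ℝ) + 1)) / ((t : ℝ) + 1) ^ δe)
              * s ^ (k + 1) := by
        rw [Finset.sum_mul]
        exact Finset.sum_congr rfl fun t ht =>
          hterm k t (le_trans (Nat.le_of_lt (Finset.mem_range.mp ht)) htbk)
      have htailsum : ∑ t ∈ Finset.Ico tbar (k + 1), s ^ (k - t) / ((t : ℝ) + 1) ^ δe
          ≤ (s⁻¹ * ρ⁻¹) / ((k : ℝ) + 1) ^ δe := by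
        calc ∑ t ∈ Finset.Ico tbar (k + 1), s ^ (k - t) / ((t : ℝ) + 1) ^ δe
            ≤ ∑ t ∈ Finset.Ico tbar (k + 1), r ^ (k - t) / ((k : ℝ) + 1) ^ δe := by
              apply Finset.sum_le_sum
              intro t ht
              obtain ⟨h1, h2⟩ := Finset.mem_Ico.mp ht
              exact htail k t h1 (Nat.lt_succ_iff.mp h2)
        _ ≤ ∑ t ∈ Finset.range (k + 1), r ^ (k - t) / ((k : ℝ) + 1) ^ δe := by
              apply Finset.sum_le_sum_of_subset_of_nonneg
              · rw [Finset.range_eq_Ico]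
                exact Finset.Ico_subset_Ico (Nat.zero_le _) (le_refl _)
              · intro t _ _
                have := hden k
                positivity
        _ = (∑ t ∈ Finset.range (k + 1), r ^ (k - t)) / ((k : ℝ) + 1) ^ δe := by
              rw [Finset.sum_div]
        _ = (∑ t ∈ Finset.range (k + 1), r ^ t) / ((k : ℝ) + 1) ^ δe := by
              congr 1
              have := Finset.sum_range_reflect (fun j => r ^ j) (k + 1)
              simpa using this
        _ ≤ (1 / (1 - r)) / ((k : ℝ) + 1) ^ δe := by
              gcongr
              exact geom_bound r hr0.le hr1 (k + 1)
        _ ≤ (s⁻¹ * ρ⁻¹) / ((k : ℝ) + 1) ^ δe := by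
              gcongr
      rw [hhead]
      linarith [htailsum]
  -- Final assembly
  intro k
  have h1 := unroll k
  have h2 := mul_le_mul_of_nonneg_left (sumbound k) hA.le
  calc m (k + 1)
      ≤ m 0 * s ^ (k + 1)
          + A * ∑ t ∈ Finset.range (k + 1), s ^ (k - t) / ((t : ℝ) + 1) ^ δe
          + c / (1 - s) := h1
  _ ≤ m 0 * s ^ (k + 1)
        + A * ((∑ t ∈ Finset.range tbar, s ^ (-((t : ℝ) + 1)) / ((t : ℝ) + 1) ^ δe) * s ^ (k + 1)
          + (s⁻¹ * ρ⁻¹) / ((k : ℝ) + 1) ^ δe)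
        + c / (1 - s) := by linarith
  _ = _ := by ring
end

section
/- Let G be a finite simple undirected graph on n ≥ 2 vertices in which every vertex has at least one neighbor; for each edge {i,j} define p({i,j}) = (1/n)·(1/deg(i) + 1/deg(j)) and for each vertex i define p_i = (1/n)·(1 + Σ_{j ∈ N(i)} 1/deg(j)); set p_m = min_i p_i. Let L₁,…,L_n ≥ 0 with L = max_i L_i, and let u₁,…,u_n be vectors in ℝ^d. Then Σ_{edges {i,j}} p({i,j})·‖(L_i/(2p_i))·u_i + (L_j/(2p_j))·u_j‖₂² ≤ (L²/(2p_m))·Σ_{i=1}^{n} ‖u_i‖₂². -/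
open Finset

section Aux

variable {n : ℕ} (G : SimpleGraph (Fin n)) [DecidableRel G.Adj]

/-- Sum over darts equals sum over vertices of sums over neighbors. -/
lemma dart_sum_eq (F : Fin n → Fin n → ℝ) :
    ∑ d : G.Dart, F d.fst d.snd = ∑ v, ∑ w ∈ G.neighborFinset v, F v w := by
  let e : (Σ v : Fin n, G.neighborSet v) ≃ G.Dart :=
    { toFun := fun s => ⟨(s.fst, s.snd), s.snd.property⟩
      invFun := fun d => ⟨d.fst, d.snd, d.adj⟩
      left_inv := fun s => by ext <;> simp
      right_inv := fun d => by ext <;> simp }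
  rw [← e.sum_comp (fun d => F d.fst d.snd), ← Finset.univ_sigma_univ, Finset.sum_sigma]
  refine Finset.sum_congr rfl fun v _ => ?_
  rw [SimpleGraph.neighborFinset_def, ← Finset.sum_set_coe (f := fun w => F v w) (G.neighborSet v)]
  exact Finset.sum_congr rfl fun w _ => rfl

/-- Sum over edges of a symmetrized function equals sum over darts. -/
lemma edge_sum_eq (F : Fin n → Fin n → ℝ) (g : Sym2 (Fin n) → ℝ)
    (hg : ∀ i j, g s(i, j) = F i j + F j i) :
    ∑ e ∈ G.edgeFinset, g e = ∑ d : G.Dart, F d.fst d.snd := by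
  classical
  rw [← Finset.sum_fiberwise_of_maps_to
    (g := SimpleGraph.Dart.edge) (t := G.edgeFinset)
    (fun d _ => by rw [SimpleGraph.mem_edgeFinset]; exact d.edge_mem)]
  refine Finset.sum_congr rfl fun e he => ?_
  rw [SimpleGraph.mem_edgeFinset] at he
  induction e with
  | _ i j =>
    have hadj : G.Adj i j := he
    let d : G.Dart := ⟨(i, j), hadj⟩
    have hfib : Finset.univ.filter (fun d' : G.Dart => d'.edge = s(i, j))
        = {d, d.symm} := by
      have := SimpleGraph.Dart.edge_fiber d
      convert this
      rfl
    rw [hfib, Finset.sum_pair (by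
      intro h
      have : i = j := congrArg (fun x => x.toProd.1) h
      exact hadj.ne this)]
    simp [d, SimpleGraph.Dart.symm, hg]

end Aux

/-- Key step in Lemma 3 of the paper bounding the second moment of the
consensus-induced gradient noise: with edge-activation probabilities
`p({i,j}) = (1/n)(1/deg i + 1/deg j)`, agent-activation probabilities
`p_i = (1/n)(1 + Σ_{j ∈ N(i)} 1/deg j)`, `p_m = min_i p_i` and `L = max_i L_i`,
`Σ_{edges {i,j}} p({i,j}) ‖(L_i/(2p_i)) u_i + (L_j/(2p_j)) u_j‖² ≤ (L²/(2p_m)) Σ_i ‖u_i‖²`. -/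
theorem stmt_9
    (n d : ℕ) (hn : 2 ≤ n)
    (G : SimpleGraph (Fin n)) [DecidableRel G.Adj]
    (hdeg : ∀ v : Fin n, 0 < G.degree v)
    (p : Fin n → ℝ)
    (hp : ∀ i, p i = (1 / (n : ℝ))
        * (1 + ∑ j ∈ G.neighborFinset i, 1 / (G.degree j : ℝ)))
    (pm : ℝ) (hpm0 : 0 < pm) (hpm : ∀ i, pm ≤ p i)
    (Li : Fin n → ℝ) (hLi : ∀ i, 0 ≤ Li i)
    (Lmax : ℝ) (hLmax : ∀ i, Li i ≤ Lmax)
    (u : Fin n → EuclideanSpace ℝ (Fin d))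
    (f : Sym2 (Fin n) → ℝ)
    (hf : ∀ i j : Fin n, f s(i, j) =
      (1 / (n : ℝ)) * (1 / (G.degree i : ℝ) + 1 / (G.degree j : ℝ))
        * ‖(Li i / (2 * p i)) • u i + (Li j / (2 * p j)) • u j‖ ^ 2) :
    ∑ e ∈ G.edgeFinset, f e ≤ (Lmax ^ 2 / (2 * pm)) * ∑ i, ‖u i‖ ^ 2 := by
  classical
  have hn0 : (0 : ℝ) < n := by positivity
  have hpp : ∀ i, 0 < p i := fun i => lt_of_lt_of_le hpm0 (hpm i)
  set Q : Fin n → Fin n → ℝ := fun i j =>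
    (1 / (n : ℝ)) * (1 / (G.degree i : ℝ) + 1 / (G.degree j : ℝ))
      * (2 * (Li i / (2 * p i)) ^ 2 * ‖u i‖ ^ 2) with hQ
  have hdegpos : ∀ v, (0 : ℝ) < (G.degree v : ℝ) := fun v => by
    exact_mod_cast hdeg v
  -- pointwise bound on edges
  have step1 : ∑ e ∈ G.edgeFinset, f e ≤
      ∑ e ∈ G.edgeFinset, Sym2.lift ⟨fun i j => Q i j + Q j i, fun i j => by ring⟩ e := by
    refine Finset.sum_le_sum fun e he => ?_
    induction e with
    | _ i j =>
      rw [hf i j, Sym2.lift_mk]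
      have hq : 0 ≤ (1 / (n : ℝ)) * (1 / (G.degree i : ℝ) + 1 / (G.degree j : ℝ)) := by
        have := hdegpos i; have := hdegpos j; positivity
      have hnorm : ‖(Li i / (2 * p i)) • u i + (Li j / (2 * p j)) • u j‖ ^ 2
          ≤ 2 * ((Li i / (2 * p i)) ^ 2 * ‖u i‖ ^ 2)
            + 2 * ((Li j / (2 * p j)) ^ 2 * ‖u j‖ ^ 2) := by
        have h1 : ‖(Li i / (2 * p i)) • u i + (Li j / (2 * p j)) • u j‖
            ≤ ‖(Li i / (2 * p i)) • u i‖ + ‖(Li j / (2 * p j)) • u j‖ :=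
          norm_add_le _ _
        have h2 : ‖(Li i / (2 * p i)) • u i‖ = |Li i / (2 * p i)| * ‖u i‖ := by
          rw [norm_smul, Real.norm_eq_abs]
        have h3 : ‖(Li j / (2 * p j)) • u j‖ = |Li j / (2 * p j)| * ‖u j‖ := by
          rw [norm_smul, Real.norm_eq_abs]
        have hnn : (0:ℝ) ≤ ‖(Li i / (2 * p i)) • u i + (Li j / (2 * p j)) • u j‖ :=
          norm_nonneg _
        have hsq := sq_abs (Li i / (2 * p i))
        have hsq' := sq_abs (Li j / (2 * p j))
        have h4 : ‖(Li i / (2 * p i)) • u i + (Li j / (2 * p j)) • u j‖ ^ 2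
            ≤ (‖(Li i / (2 * p i)) • u i‖ + ‖(Li j / (2 * p j)) • u j‖) ^ 2 :=
          pow_le_pow_left₀ hnn h1 2
        rw [h2, h3] at h4
        have e1 : (|Li i / (2 * p i)| * ‖u i‖) ^ 2
            = (Li i / (2 * p i)) ^ 2 * ‖u i‖ ^ 2 := by rw [mul_pow, hsq]
        have e2 : (|Li j / (2 * p j)| * ‖u j‖) ^ 2
            = (Li j / (2 * p j)) ^ 2 * ‖u j‖ ^ 2 := by rw [mul_pow, hsq']
        nlinarith [h4, e1, e2,
          sq_nonneg (|Li i / (2 * p i)| * ‖u i‖ - |Li j / (2 * p j)| * ‖u j‖)]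
      calc (1 / (n : ℝ)) * (1 / (G.degree i : ℝ) + 1 / (G.degree j : ℝ))
            * ‖(Li i / (2 * p i)) • u i + (Li j / (2 * p j)) • u j‖ ^ 2
          ≤ (1 / (n : ℝ)) * (1 / (G.degree i : ℝ) + 1 / (G.degree j : ℝ))
            * (2 * ((Li i / (2 * p i)) ^ 2 * ‖u i‖ ^ 2)
              + 2 * ((Li j / (2 * p j)) ^ 2 * ‖u j‖ ^ 2)) :=
            mul_le_mul_of_nonneg_left hnorm hq
        _ = Q i j + Q j i := by simp only [hQ]; ring
  -- rewrite the symmetrized sum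
  have step2 : ∑ e ∈ G.edgeFinset,
      Sym2.lift ⟨fun i j => Q i j + Q j i, fun i j => by ring⟩ e
      = ∑ v, ∑ w ∈ G.neighborFinset v, Q v w := by
    rw [edge_sum_eq G Q _ (fun i j => by rw [Sym2.lift_mk]), dart_sum_eq]
  -- inner sum evaluates via p
  have step3 : ∀ v, ∑ w ∈ G.neighborFinset v, Q v w
      = 2 * (Li v / (2 * p v)) ^ 2 * ‖u v‖ ^ 2 * p v := by
    intro v
    have hcard : (G.neighborFinset v).card = G.degree v := G.card_neighborFinset_eq_degree v
    have : ∑ w ∈ G.neighborFinset v,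
        (1 / (n : ℝ)) * (1 / (G.degree v : ℝ) + 1 / (G.degree w : ℝ)) = p v := by
      rw [hp v, ← Finset.mul_sum]
      congr 1
      rw [Finset.sum_add_distrib, Finset.sum_const, hcard, nsmul_eq_mul,
        mul_one_div, div_self (ne_of_gt (hdegpos v))]
    calc ∑ w ∈ G.neighborFinset v, Q v w
        = (∑ w ∈ G.neighborFinset v,
            (1 / (n : ℝ)) * (1 / (G.degree v : ℝ) + 1 / (G.degree w : ℝ)))
          * (2 * (Li v / (2 * p v)) ^ 2 * ‖u v‖ ^ 2) := by
          rw [Finset.sum_mul]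
      _ = 2 * (Li v / (2 * p v)) ^ 2 * ‖u v‖ ^ 2 * p v := by rw [this]; ring
  -- final per-vertex bound
  have step4 : ∀ v, 2 * (Li v / (2 * p v)) ^ 2 * ‖u v‖ ^ 2 * p v
      ≤ (Lmax ^ 2 / (2 * pm)) * ‖u v‖ ^ 2 := by
    intro v
    have hpv := hpp v
    have h1 : 2 * (Li v / (2 * p v)) ^ 2 * p v = Li v ^ 2 / (2 * p v) := by
      field_simp
    have h2 : Li v ^ 2 ≤ Lmax ^ 2 := by
      have := hLi v; have := hLmax v; nlinarith
    have h3 : Li v ^ 2 / (2 * p v) ≤ Lmax ^ 2 / (2 * pm) := by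
      apply div_le_div₀ (by positivity) h2 (by positivity)
      have := hpm v; linarith
    calc 2 * (Li v / (2 * p v)) ^ 2 * ‖u v‖ ^ 2 * p v
        = (2 * (Li v / (2 * p v)) ^ 2 * p v) * ‖u v‖ ^ 2 := by ring
      _ = (Li v ^ 2 / (2 * p v)) * ‖u v‖ ^ 2 := by rw [h1]
      _ ≤ (Lmax ^ 2 / (2 * pm)) * ‖u v‖ ^ 2 :=
          mul_le_mul_of_nonneg_right h3 (by positivity)
  calc ∑ e ∈ G.edgeFinset, f e
      ≤ ∑ e ∈ G.edgeFinset,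
          Sym2.lift ⟨fun i j => Q i j + Q j i, fun i j => by ring⟩ e := step1
    _ = ∑ v, ∑ w ∈ G.neighborFinset v, Q v w := step2
    _ = ∑ v, 2 * (Li v / (2 * p v)) ^ 2 * ‖u v‖ ^ 2 * p v :=
        Finset.sum_congr rfl fun v _ => step3 v
    _ ≤ ∑ v, (Lmax ^ 2 / (2 * pm)) * ‖u v‖ ^ 2 :=
        Finset.sum_le_sum fun v _ => step4 v
    _ = (Lmax ^ 2 / (2 * pm)) * ∑ i, ‖u i‖ ^ 2 := by rw [Finset.mul_sum]
end
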